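/- Let W be an n×k matrix of rank k whose columns are orthogonal to span(X, Z), let Y^{⊥zx} := Y − blp(Y|X,Z), and set W̃ := blp(Y^{⊥zx} | columns of W); assume W̃ ≠ 0 and σ_{y·zx} > 0. Then the proportionate reduction in unexplained variance from adding W̃ equals that from adding all of W: ρ²_{yw̃·zx} = ρ²_{yw·zx}, i.e., 1 − σ²_{y·zxw̃}/σ²_{y·zx} = 1 − σ²_{y·zxw}/σ²_{y·zx}. -/

import Mathlib

open scoped BigOperators

/-- Weighted inner product on ℝⁿ: `(A,B) := (∑ i, wᵢ Aᵢ Bᵢ) / (∑ i, wᵢ)`. -/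
noncomputable def wip {n : ℕ} (w A B : Fin n → ℝ) : ℝ :=
  (∑ i, w i * A i * B i) / (∑ i, w i)

/-- `P` is the best linear predictor (orthogonal projection with respect to the
weighted inner product `wip w`) of `A` onto the span of the collection `C`. -/
def IsBlp {n : ℕ} (w : Fin n → ℝ) (C : Set (Fin n → ℝ)) (A P : Fin n → ℝ) : Prop :=
  P ∈ Submodule.span ℝ C ∧ ∀ v ∈ Submodule.span ℝ C, wip w (A - P) v = 0

lemma wip_comm {n : ℕ} (w A B : Fin n → ℝ) : wip w A B = wip w B A := by
  unfold wip; congr 1; exact Finset.sum_congr rfl fun i _ => by ring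

lemma wip_add_right {n : ℕ} (w u a b : Fin n → ℝ) :
    wip w u (a + b) = wip w u a + wip w u b := by
  unfold wip
  rw [← add_div]
  congr 1
  rw [← Finset.sum_add_distrib]
  exact Finset.sum_congr rfl fun i _ => by simp [Pi.add_apply]; ring

lemma wip_smul_right {n : ℕ} (w u v : Fin n → ℝ) (c : ℝ) :
    wip w u (c • v) = c * wip w u v := by
  unfold wip
  rw [← mul_div_assoc, Finset.mul_sum]
  congr 1
  exact Finset.sum_congr rfl fun i _ => by simp [Pi.smul_apply]; ring

lemma wip_zero_right {n : ℕ} (w u : Fin n → ℝ) : wip w u 0 = 0 := by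
  simp [wip]

lemma wip_add_left {n : ℕ} (w a b c : Fin n → ℝ) :
    wip w (a + b) c = wip w a c + wip w b c := by
  rw [wip_comm, wip_add_right, wip_comm w c a, wip_comm w c b]

lemma wip_sub_right {n : ℕ} (w u a b : Fin n → ℝ) :
    wip w u (a - b) = wip w u a - wip w u b := by
  have := wip_add_right w u (a - b) b
  simp at this
  linarith

lemma wip_sub_left {n : ℕ} (w a b c : Fin n → ℝ) :
    wip w (a - b) c = wip w a c - wip w b c := by
  rw [wip_comm, wip_sub_right, wip_comm w c a, wip_comm w c b]

lemma orth_span {n : ℕ} (w u : Fin n → ℝ) (C : Set (Fin n → ℝ))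
    (h : ∀ v ∈ C, wip w u v = 0) :
    ∀ v ∈ Submodule.span ℝ C, wip w u v = 0 := by
  intro v hv
  induction hv using Submodule.span_induction with
  | mem x hx => exact h x hx
  | zero => exact wip_zero_right w u
  | add x y hx hy ihx ihy => rw [wip_add_right, ihx, ihy]; ring
  | smul c x hx ih => rw [wip_smul_right, ih]; ring

/-- Any two best linear predictors give the same residual variance. -/
lemma blp_resid_eq {n : ℕ} (w : Fin n → ℝ) (C : Set (Fin n → ℝ)) (A P Q : Fin n → ℝ)
    (hP : IsBlp w C A P) (hQ : IsBlp w C A Q) :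
    wip w (A - P) (A - P) = wip w (A - Q) (A - Q) := by
  have hd : P - Q ∈ Submodule.span ℝ C := sub_mem hP.1 hQ.1
  have h1 : wip w (A - P) (P - Q) = 0 := hP.2 _ hd
  have h2 : wip w (A - Q) (P - Q) = 0 := hQ.2 _ hd
  have h1c : wip w (P - Q) (A - P) = 0 := by rw [wip_comm]; exact h1
  have h2c : wip w (P - Q) (A - Q) = 0 := by rw [wip_comm]; exact h2
  have hPQ : (P - Q : Fin n → ℝ) = (A - Q) - (A - P) := by abel
  have hdd : wip w (P - Q) (P - Q) = 0 := by
    calc wip w (P - Q) (P - Q) = wip w (P - Q) ((A - Q) - (A - P)) := by rw [← hPQ]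
      _ = wip w (P - Q) (A - Q) - wip w (P - Q) (A - P) := wip_sub_right w _ _ _
      _ = 0 := by rw [h1c, h2c]; ring
  have hAQ : A - Q = (A - P) + (P - Q) := by abel
  rw [hAQ, wip_add_right, wip_add_left, wip_add_left, h1, h1c, hdd]
  ring

/-- Lemma, part 1: for an `n×k` matrix `W` of rank `k` whose columns
are orthogonal to `span(X,Z)`, with `W̃ := blp(Y^{⊥zx} | columns of W) ≠ 0` and
`σ_{y·zx} > 0`, the proportionate reduction in unexplained variance from adding `W̃`
equals that from adding all of `W`:
`1 − σ²_{y·zxw̃}/σ²_{y·zx} = 1 − σ²_{y·zxw}/σ²_{y·zx}`. -/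
theorem stmt10 {n k : ℕ} (w : Fin n → ℝ) (hw : ∀ i, 0 < w i)
    (X : Set (Fin n → ℝ)) (hXfin : X.Finite)
    (h1 : (fun _ => (1 : ℝ)) ∈ Submodule.span ℝ X)
    (Y Z : Fin n → ℝ) (W : Fin k → (Fin n → ℝ))
    (hWrank : LinearIndependent ℝ W)
    (hWorth : ∀ i, ∀ v ∈ Submodule.span ℝ (insert Z X), wip w (W i) v = 0)
    (Pyzx Wt Pyzxw Pyzxwt : Fin n → ℝ)
    (hPyzx : IsBlp w (insert Z X) Y Pyzx)
    (hWt : IsBlp w (Set.range W) (Y - Pyzx) Wt)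
    (hWtne : Wt ≠ 0)
    (hPyzxw : IsBlp w (insert Z X ∪ Set.range W) Y Pyzxw)
    (hPyzxwt : IsBlp w (insert Wt (insert Z X)) Y Pyzxwt)
    (hσyzx : 0 < wip w (Y - Pyzx) (Y - Pyzx)) :
    1 - wip w (Y - Pyzxwt) (Y - Pyzxwt) / wip w (Y - Pyzx) (Y - Pyzx)
      = 1 - wip w (Y - Pyzxw) (Y - Pyzxw) / wip w (Y - Pyzx) (Y - Pyzx) := by
  set Q : Fin n → ℝ := Pyzx + Wt with hQdef
  have hresid : Y - Q = (Y - Pyzx) - Wt := by rw [hQdef]; abel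
  -- Wt is orthogonal to span (insert Z X)
  have hWtorth : ∀ v ∈ Submodule.span ℝ (insert Z X), wip w Wt v = 0 := by
    intro v hv
    rw [wip_comm]
    refine orth_span w v (Set.range W) ?_ Wt hWt.1
    rintro u ⟨i, rfl⟩
    rw [wip_comm]
    exact hWorth i v hv
  -- residual Y - Q is orthogonal to span (insert Z X)
  have hres_zx : ∀ v ∈ Submodule.span ℝ (insert Z X), wip w (Y - Q) v = 0 := by
    intro v hv
    rw [hresid, wip_sub_left, hPyzx.2 v hv, hWtorth v hv]
    ring
  -- residual Y - Q is orthogonal to span (range W)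
  have hres_W : ∀ v ∈ Submodule.span ℝ (Set.range W), wip w (Y - Q) v = 0 := by
    intro v hv
    have : Y - Q = (Y - Pyzx) - Wt := hresid
    rw [this]
    exact hWt.2 v hv
  -- Q is a blp onto span (insert Z X ∪ range W)
  have hQ2 : IsBlp w (insert Z X ∪ Set.range W) Y Q := by
    constructor
    · exact add_mem (Submodule.span_mono Set.subset_union_left hPyzx.1)
        (Submodule.span_mono Set.subset_union_right hWt.1)
    · refine orth_span w (Y - Q) _ ?_
      rintro v (hv | hv)
      · exact hres_zx v (Submodule.subset_span hv)
      · exact hres_W v (Submodule.subset_span hv)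
  -- Q is a blp onto span (insert Wt (insert Z X))
  have hQ1 : IsBlp w (insert Wt (insert Z X)) Y Q := by
    constructor
    · exact add_mem
        (Submodule.span_mono (Set.subset_insert _ _) hPyzx.1)
        (Submodule.subset_span (Set.mem_insert _ _))
    · refine orth_span w (Y - Q) _ ?_
      rintro v (rfl | hv)
      · exact hres_W v hWt.1
      · exact hres_zx v (Submodule.subset_span hv)
  have e1 : wip w (Y - Pyzxwt) (Y - Pyzxwt) = wip w (Y - Q) (Y - Q) :=
    blp_resid_eq w _ Y Pyzxwt Q hPyzxwt hQ1
  have e2 : wip w (Y - Pyzxw) (Y - Pyzxw) = wip w (Y - Q) (Y - Q) :=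
    blp_resid_eq w _ Y Pyzxw Q hPyzxw hQ2
  rw [e1, e2]
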